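/- arXiv:math/0110232 — 2 statements merged into one kernel-verified Lean document; each statement's English description precedes it below -/
import Mathlib

section
/- For any nonzero polynomial q ∈ K[x_1,...,x_n] over a field K, the exponent vector of the leading monomial of q with respect to a pure lexicographic order is a vertex (extreme point) of the Newton polytope of q. -/
open MvPolynomial

/-- A strict convex combination with one strictly lex-smaller endpoint stays strictly
lex-smaller. -/
lemma lex_comb_lt {n : ℕ} {x y p : Fin n → ℝ} {a b : ℝ} (ha : 0 < a) (hb : 0 < b)
    (hab : a + b = 1) (hx : toLex x < toLex p) (hy : toLex y ≤ toLex p) :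
    toLex (a • x + b • y) < toLex p := by
  obtain ⟨i, hi0, hxi0⟩ := hx
  have hi : ∀ j, j < i → x j = p j := hi0
  have hxi : x i < p i := hxi0
  rcases hy.lt_or_eq with hy' | hy'
  · obtain ⟨k, hk0, hyk0⟩ := hy'
    have hk : ∀ j, j < k → y j = p j := hk0
    have hyk : y k < p k := hyk0
    refine ⟨min i k, fun j hj => ?_, ?_⟩
    · have hj1 : x j = p j := hi j (lt_of_lt_of_le hj (min_le_left _ _))
      have hj2 : y j = p j := hk j (lt_of_lt_of_le hj (min_le_right _ _))
      show a * x j + b * y j = p j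
      rw [hj1, hj2, ← add_mul, hab, one_mul]
    · set c := min i k with hc
      have h1 : x c ≤ p c := by
        rcases lt_or_ge c i with h | h
        · exact (hi c h).le
        · have : c = i := le_antisymm (min_le_left _ _) h
          rw [this]; exact hxi.le
      have h2 : y c ≤ p c := by
        rcases lt_or_ge c k with h | h
        · exact (hk c h).le
        · have : c = k := le_antisymm (min_le_right _ _) h
          rw [this]; exact hyk.le
      have h3 : x c < p c ∨ y c < p c := by
        rcases le_total i k with h | h
        · left; have : c = i := min_eq_left h; rw [this]; exact hxi
        · right; have : c = k := min_eq_right h; rw [this]; exact hyk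
      show a * x c + b * y c < p c
      have h4 : a * p c + b * p c = p c := by rw [← add_mul, hab, one_mul]
      rcases h3 with h3 | h3
      · nlinarith [mul_lt_mul_of_pos_left h3 ha, mul_le_mul_of_nonneg_left h2 hb.le]
      · nlinarith [mul_le_mul_of_nonneg_left h1 ha.le, mul_lt_mul_of_pos_left h3 hb]
  · have hyp : y = p := toLex.injective hy'
    subst hyp
    refine ⟨i, fun j hj => ?_, ?_⟩
    · show a * x j + b * y j = y j
      rw [hi j hj, ← add_mul, hab, one_mul]
    · show a * x i + b * y i < y i
      have h4 : a * y i + b * y i = y i := by rw [← add_mul, hab, one_mul]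
      nlinarith [mul_lt_mul_of_pos_left hxi ha]

lemma lex_comb_le {n : ℕ} {x y p : Fin n → ℝ} {a b : ℝ} (ha : 0 < a) (hb : 0 < b)
    (hab : a + b = 1) (hx : toLex x ≤ toLex p) (hy : toLex y ≤ toLex p) :
    toLex (a • x + b • y) ≤ toLex p := by
  rcases hx.lt_or_eq with hx' | hx'
  · exact (lex_comb_lt ha hb hab hx' hy).le
  · have hxp : x = p := toLex.injective hx'
    subst hxp
    rcases hy.lt_or_eq with hy' | hy'
    · have := lex_comb_lt hb ha (by linarith) hy' (le_refl (toLex x))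
      have hcomm : b • y + a • x = a • x + b • y := add_comm _ _
      rw [hcomm] at this
      exact this.le
    · have hyp : y = x := toLex.injective hy'
      subst hyp
      have : a • y + b • y = y := by
        funext j; show a * y j + b * y j = y j; rw [← add_mul, hab, one_mul]
      rw [this]

/-- For a nonzero polynomial `q`, the exponent vector of the leading monomial of `q` with
respect to a pure lexicographic order (given by an ordering `σ` of the variables) is a vertex
(extreme point) of the Newton polytope of `q`. -/
theorem stmt_6 (K : Type*) [Field K] (n : ℕ) (q : MvPolynomial (Fin n) K) (hq : q ≠ 0)
    (σ : Equiv.Perm (Fin n)) (m : Fin n →₀ ℕ) (hm : m ∈ q.support)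
    (hlead : ∀ m' ∈ q.support,
      toLex (Finsupp.equivMapDomain σ m') ≤ toLex (Finsupp.equivMapDomain σ m)) :
    (fun i => (m i : ℝ)) ∈
      Set.extremePoints ℝ
        (convexHull ℝ ((fun (m : Fin n →₀ ℕ) (i : Fin n) => (m i : ℝ)) '' q.support)) := by
  classical
  set S : Set (Fin n → ℝ) := (fun (m : Fin n →₀ ℕ) (i : Fin n) => (m i : ℝ)) '' q.support with hS
  set P : Fin n → ℝ := fun i => (m i : ℝ) with hP
  set F : (Fin n → ℝ) → (Fin n → ℝ) := fun x i => x (σ.symm i) with hF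
  have hFinj : Function.Injective F := by
    intro x y h
    funext i
    have := congrFun h (σ i)
    simpa [hF] using this
  have hFsmul : ∀ (a b : ℝ) (x y : Fin n → ℝ), F (a • x + b • y) = a • F x + b • F y := by
    intro a b x y; funext i; simp [hF]
  -- every point of S is lex-below P after permuting
  have hSle : ∀ x ∈ S, toLex (F x) ≤ toLex (F P) := by
    rintro x ⟨m', hm', rfl⟩
    have h := hlead m' hm'
    rcases h.lt_or_eq with h' | h'
    · obtain ⟨j, hj, hlt⟩ := h'
      refine le_of_lt ⟨j, fun d hd => ?_, ?_⟩
      · have h5 := hj d hd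
        simp only [ofLex_toLex, Finsupp.equivMapDomain_apply] at h5
        simp [hF, hP, h5]
      · simp only [ofLex_toLex, Finsupp.equivMapDomain_apply] at hlt
        show ((m' (σ.symm j) : ℝ)) < (m (σ.symm j) : ℝ)
        exact_mod_cast hlt
    · have h'' : Finsupp.equivMapDomain σ m' = Finsupp.equivMapDomain σ m :=
        toLex.injective h'
      have : ∀ i, m' (σ.symm i) = m (σ.symm i) := by
        intro i
        have := DFunLike.congr_fun h'' i
        simpa using this
      have : F (fun i => (m' i : ℝ)) = F P := by
        funext i; simp [hF, hP, this i]
      rw [this]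
  -- the closed lex lower set is convex, so it contains the convex hull
  have hCconv : Convex ℝ {x : Fin n → ℝ | toLex (F x) ≤ toLex (F P)} := by
    intro x hx y hy a b ha hb hab
    rcases ha.eq_or_lt with rfl | ha'
    · have : b = 1 := by linarith
      subst this
      simpa using hy
    rcases hb.eq_or_lt with rfl | hb'
    · have : a = 1 := by linarith
      subst this
      simpa using hx
    show toLex (F (a • x + b • y)) ≤ toLex (F P)
    rw [hFsmul]
    exact lex_comb_le ha' hb' hab hx hy
  have hhull : convexHull ℝ S ⊆ {x : Fin n → ℝ | toLex (F x) ≤ toLex (F P)} :=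
    convexHull_min hSle hCconv
  have hPmem : P ∈ convexHull ℝ S :=
    subset_convexHull ℝ S ⟨m, hm, rfl⟩
  refine ⟨hPmem, ?_⟩
  intro x₁ hx₁ x₂ hx₂ hseg
  obtain ⟨a, b, ha, hb, hab, heq⟩ := hseg
  have h₁ : toLex (F x₁) ≤ toLex (F P) := hhull hx₁
  have h₂ : toLex (F x₂) ≤ toLex (F P) := hhull hx₂
  have key : ∀ (u v : Fin n → ℝ) (c d : ℝ), 0 < c → 0 < d → c + d = 1 →
      c • u + d • v = P → toLex (F u) ≤ toLex (F P) → toLex (F v) ≤ toLex (F P) → u = P := by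
    intro u v c d hc hd hcd hcomb hu hv
    by_contra hne
    have hFne : toLex (F u) ≠ toLex (F P) := fun h =>
      hne (hFinj (toLex.injective h))
    have hlt : toLex (F u) < toLex (F P) := hu.lt_of_ne hFne
    have := lex_comb_lt hc hd hcd hlt hv
    rw [← hFsmul, hcomb] at this
    exact lt_irrefl _ this
  exact key x₁ x₂ a b ha hb hab heq h₁ h₂
end

section
/- Let K be a field of characteristic 0. If q ∈ K[x_1,...,x_n] is a coordinate polynomial (i.e., there is a K-algebra automorphism of K[x_1,...,x_n] sending q to x_1), and q is written q = x_1^k + u with the leading lex monomial of u divisible by a monomial involving all n variables with positive exponents and strictly greater than x_1^k, then we reach a contradiction; hence no coordinate polynomial has this form. -/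
open MvPolynomial

private lemma geom_aux (B : ℕ) (hB : 1 ≤ B) :
    ∀ K : ℕ, (∑ e ∈ Finset.range K, B ^ e) * (B - 1) + 1 = B ^ K := by
  obtain ⟨t, rfl⟩ : ∃ t, B = t + 1 := ⟨B - 1, (Nat.succ_pred_eq_of_pos hB).symm⟩
  intro K
  induction K with
  | zero => simp
  | succ K ih =>
    rw [Finset.sum_range_succ, add_mul]
    simp only [Nat.add_sub_cancel] at ih ⊢
    calc (∑ e ∈ Finset.range K, (t+1) ^ e) * t + (t+1)^K * t + 1
        = ((∑ e ∈ Finset.range K, (t+1) ^ e) * t + 1) + (t+1)^K * t := by ring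
      _ = (t+1)^K + (t+1)^K * t := by rw [ih]
      _ = (t+1)^(K+1) := by ring

private lemma lex_sum_lt (B N : ℕ) (hB : 1 ≤ B) (a b : ℕ → ℕ) (ha : ∀ j, a j < B)
    (i : ℕ) (hiN : i < N) (heq : ∀ j < i, a j = b j) (hlt : a i < b i) :
    ∑ j ∈ Finset.range N, B ^ (N - 1 - j) * a j <
      ∑ j ∈ Finset.range N, B ^ (N - 1 - j) * b j := by
  have hsplit : ∀ g : ℕ → ℕ, ∑ j ∈ Finset.range N, B ^ (N - 1 - j) * g j =
      (∑ j ∈ Finset.range i, B ^ (N - 1 - j) * g j) + B ^ (N - 1 - i) * g i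
        + ∑ j ∈ Finset.Ico (i+1) N, B ^ (N - 1 - j) * g j := by
    intro g
    rw [← Finset.sum_range_add_sum_Ico _ hiN, Finset.sum_range_succ]
  have htail : ∑ j ∈ Finset.Ico (i+1) N, B ^ (N - 1 - j) * a j + 1 ≤ B ^ (N - 1 - i) := by
    have h1 : ∑ j ∈ Finset.Ico (i+1) N, B ^ (N - 1 - j) * a j ≤
        ∑ j ∈ Finset.Ico (i+1) N, B ^ (N - 1 - j) * (B - 1) := by
      apply Finset.sum_le_sum
      intro j _
      exact Nat.mul_le_mul_left _ (by have := ha j; omega)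
    have h2 : ∑ j ∈ Finset.Ico (i+1) N, B ^ (N - 1 - j) * (B - 1) =
        ∑ e ∈ Finset.range (N - 1 - i), B ^ e * (B - 1) := by
      apply Finset.sum_nbij' (fun j => N - 1 - j) (fun e => N - 1 - e)
      · intro j hj; simp only [Finset.mem_Ico] at hj; simp only [Finset.mem_range]; omega
      · intro e he; simp only [Finset.mem_range] at he; simp only [Finset.mem_Ico]; omega
      · intro j hj; simp only [Finset.mem_Ico] at hj; omega
      · intro e he; simp only [Finset.mem_range] at he; omega
      · intro j hj; rfl
    have h3 := geom_aux B hB (N - 1 - i)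
    have h4 : ∑ e ∈ Finset.range (N - 1 - i), B ^ e * (B - 1) =
        (∑ e ∈ Finset.range (N - 1 - i), B ^ e) * (B - 1) := by rw [Finset.sum_mul]
    omega
  rw [hsplit a, hsplit b]
  have hfront : ∑ j ∈ Finset.range i, B ^ (N - 1 - j) * a j =
      ∑ j ∈ Finset.range i, B ^ (N - 1 - j) * b j := by
    apply Finset.sum_congr rfl
    intro j hj
    rw [heq j (Finset.mem_range.mp hj)]
  have hmid : B ^ (N - 1 - i) * a i + B ^ (N - 1 - i) ≤ B ^ (N - 1 - i) * b i := by
    calc B ^ (N - 1 - i) * a i + B ^ (N - 1 - i) = B ^ (N - 1 - i) * (a i + 1) := by ring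
      _ ≤ B ^ (N - 1 - i) * b i := Nat.mul_le_mul_left _ hlt
  omega

private lemma unique_max_extreme {E : Type*} [AddCommGroup E] [Module ℝ E]
    (t : Finset E) (x : E) (hx : x ∈ t) (l : E →ₗ[ℝ] ℝ)
    (hmax : ∀ y ∈ t, y ≠ x → l y < l x) :
    x ∈ Set.extremePoints ℝ (convexHull ℝ (t : Set E)) := by
  classical
  have hle : ∀ z ∈ convexHull ℝ (t : Set E), l z ≤ l x := by
    intro z hz
    have hconv : Convex ℝ {v : E | l v ≤ l x} := convex_halfSpace_le l.isLinear _
    refine convexHull_min ?_ hconv hz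
    intro y hy
    simp only [Set.mem_setOf_eq]
    rcases eq_or_ne y x with rfl | h
    · exact le_rfl
    · exact (hmax y hy h).le
  have heq : ∀ z ∈ convexHull ℝ (t : Set E), l z = l x → z = x := by
    intro z hz hlz
    rw [Finset.mem_convexHull'] at hz
    obtain ⟨w, hw0, hw1, hwz⟩ := hz
    have hl : ∑ y ∈ t, w y * l y = l x := by
      rw [← hlz, ← hwz, map_sum]
      simp [smul_eq_mul]
    have hz0 : ∀ y ∈ t, y ≠ x → w y = 0 := by
      by_contra h
      push_neg at h
      obtain ⟨y0, hy0t, hy0x, hwy0⟩ := h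
      have hwy0' : 0 < w y0 := lt_of_le_of_ne (hw0 y0 hy0t) (Ne.symm hwy0)
      have hlt : ∑ y ∈ t, w y * l y < ∑ y ∈ t, w y * l x := by
        apply Finset.sum_lt_sum
        · intro y hy
          rcases eq_or_ne y x with rfl | h
          · exact le_rfl
          · exact mul_le_mul_of_nonneg_left (hmax y hy h).le (hw0 y hy)
        · exact ⟨y0, hy0t, mul_lt_mul_of_pos_left (hmax y0 hy0t hy0x) hwy0'⟩
      rw [hl, ← Finset.sum_mul, hw1, one_mul] at hlt
      exact lt_irrefl _ hlt
    have hwx : w x = 1 := by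
      rw [← Finset.add_sum_erase _ _ hx] at hw1
      have hz : ∑ y ∈ t.erase x, w y = 0 :=
        Finset.sum_eq_zero fun y hy =>
          hz0 y (Finset.mem_of_mem_erase hy) (Finset.ne_of_mem_erase hy)
      rw [hz, add_zero] at hw1
      exact hw1
    rw [← hwz, ← Finset.add_sum_erase _ _ hx, hwx, one_smul]
    have hz : ∑ y ∈ t.erase x, w y • y = 0 :=
      Finset.sum_eq_zero fun y hy => by
        rw [hz0 y (Finset.mem_of_mem_erase hy) (Finset.ne_of_mem_erase hy), zero_smul]
    rw [hz, add_zero]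
  rw [mem_extremePoints]
  refine ⟨subset_convexHull ℝ _ hx, ?_⟩
  intro x1 hx1 x2 hx2 hseg
  obtain ⟨a, b, ha, hb, hab, hsum⟩ := hseg
  have h1 : l x1 ≤ l x := hle x1 hx1
  have h2 : l x2 ≤ l x := hle x2 hx2
  have hlx : a * l x1 + b * l x2 = l x := by
    rw [← hsum]; simp [smul_eq_mul]
  have hid : a * l x + b * l x = l x := by rw [← add_mul, hab, one_mul]
  have he1 : l x1 = l x := by
    by_contra h
    have hlt : l x1 < l x := lt_of_le_of_ne h1 h
    have h5 : a * l x1 + b * l x2 < a * l x + b * l x :=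
      add_lt_add_of_lt_of_le (mul_lt_mul_of_pos_left hlt ha) (mul_le_mul_of_nonneg_left h2 hb.le)
    rw [hlx, hid] at h5
    exact lt_irrefl _ h5
  have he2 : l x2 = l x := by
    by_contra h
    have hlt : l x2 < l x := lt_of_le_of_ne h2 h
    have h5 : a * l x1 + b * l x2 < a * l x + b * l x :=
      add_lt_add_of_le_of_lt (mul_le_mul_of_nonneg_left h1 ha.le) (mul_lt_mul_of_pos_left hlt hb)
    rw [hlx, hid] at h5
    exact lt_irrefl _ h5
  exact ⟨heq x1 hx1 he1, heq x2 hx2 he2⟩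

/-- Assuming Hadas's theorem (every vertex of the Newton polytope of a coordinate polynomial
lies on a coordinate hyperplane): if `q = x_1^k + u` where the leading lex monomial of `u` is
divisible by a monomial involving all variables with positive exponents and is strictly
greater than `x_1^k`, then `q` cannot be a coordinate polynomial. -/
theorem stmt_18 (K : Type*) [Field K] [CharZero K] (n : ℕ)
    (hHadas : ∀ r : MvPolynomial (Fin (n + 1)) K,
      (∃ α : MvPolynomial (Fin (n + 1)) K ≃ₐ[K] MvPolynomial (Fin (n + 1)) K, α r = X 0) →
      ∀ v ∈ Set.extremePoints ℝ
          (convexHull ℝ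
            ((fun (e : Fin (n + 1) →₀ ℕ) (i : Fin (n + 1)) => (e i : ℝ)) '' r.support)),
        ∃ i, v i = 0)
    (u : MvPolynomial (Fin (n + 1)) K) (hu : u ≠ 0)
    (σ : Equiv.Perm (Fin (n + 1))) (m : Fin (n + 1) →₀ ℕ) (hm : m ∈ u.support)
    (hlead : ∀ m' ∈ u.support,
      toLex (Finsupp.equivMapDomain σ m') ≤ toLex (Finsupp.equivMapDomain σ m))
    (hdiv : ∃ d : Fin (n + 1) →₀ ℕ, (∀ i, 0 < d i) ∧ ∀ i, d i ≤ m i)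
    (k : ℕ) (hk : 1 ≤ k)
    (hgt : toLex (Finsupp.equivMapDomain σ (Finsupp.single (0 : Fin (n + 1)) k)) <
      toLex (Finsupp.equivMapDomain σ m))
    (hcoord : ∃ α : MvPolynomial (Fin (n + 1)) K ≃ₐ[K] MvPolynomial (Fin (n + 1)) K,
      α (X 0 ^ k + u) = X 0) :
    False := by
  classical
  set q : MvPolynomial (Fin (n + 1)) K := X 0 ^ k + u with hq
  set f : (Fin (n + 1) →₀ ℕ) → (Fin (n + 1) → ℝ) := fun e i => (e i : ℝ) with hf
  -- m ≠ single 0 k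
  have hne : m ≠ Finsupp.single (0 : Fin (n + 1)) k := by
    intro h
    rw [h] at hgt
    exact lt_irrefl _ hgt
  -- m ∈ q.support
  have hmq : m ∈ q.support := by
    rw [MvPolynomial.mem_support_iff, hq, MvPolynomial.coeff_add, MvPolynomial.coeff_X_pow,
      if_neg (fun h => hne h.symm), zero_add]
    exact MvPolynomial.mem_support_iff.mp hm
  -- q.support ⊆ insert (single 0 k) u.support
  have hsub : q.support ⊆ insert (Finsupp.single (0 : Fin (n + 1)) k) u.support := by
    intro e he
    have := MvPolynomial.support_add he
    rw [MvPolynomial.support_X_pow] at this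
    simpa using this
  -- bound B
  set B : ℕ := 1 + q.support.sup (fun e => ∑ i, e i) with hB
  have hB1 : 1 ≤ B := by omega
  have hBbound : ∀ e ∈ q.support, ∀ i, e i < B := by
    intro e he i
    have h1 : e i ≤ ∑ i', e i' :=
      Finset.single_le_sum (f := fun i' => e i') (fun _ _ => Nat.zero_le _) (Finset.mem_univ i)
    have h2 : (∑ i', e i') ≤ q.support.sup (fun e => ∑ i, e i) :=
      Finset.le_sup (f := fun e => ∑ i, e i) he
    omega
  -- the linear functional
  set l : (Fin (n + 1) → ℝ) →ₗ[ℝ] ℝ :=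
    { toFun := fun v => ∑ i, ((B : ℝ)) ^ (n - (σ i : ℕ)) * v i
      map_add' := fun v w => by simp [mul_add, Finset.sum_add_distrib]
      map_smul' := fun c v => by
        simp only [Pi.smul_apply, smul_eq_mul, RingHom.id_apply, Finset.mul_sum]
        exact Finset.sum_congr rfl fun i _ => by ring } with hl
  -- l (f e) as a nat sum
  have hlval : ∀ e : Fin (n + 1) →₀ ℕ,
      l (f e) = ((∑ j ∈ Finset.range (n + 1), B ^ (n + 1 - 1 - j) *
        (fun j => if h : j < n + 1 then Finsupp.equivMapDomain σ e ⟨j, h⟩ else 0) j : ℕ) : ℝ) := by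
    intro e
    have h1 : l (f e) = ∑ i : Fin (n + 1), ((B : ℝ)) ^ (n - (σ i : ℕ)) * (e i : ℝ) := rfl
    rw [h1]
    rw [← Equiv.sum_comp σ.symm (fun i => ((B : ℝ)) ^ (n - (σ i : ℕ)) * (e i : ℝ))]
    push_cast
    rw [← Fin.sum_univ_eq_sum_range]
    apply Finset.sum_congr rfl
    intro j _
    simp [Finsupp.equivMapDomain_apply, j.isLt]
  -- strict max of l ∘ f on q.support
  have hmax : ∀ e ∈ q.support, e ≠ m → l (f e) < l (f m) := by
    intro e he hne'
    have hlex : toLex (Finsupp.equivMapDomain σ e) < toLex (Finsupp.equivMapDomain σ m) := by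
      rcases Finset.mem_insert.mp (hsub he) with h | h
      · rw [h]; exact hgt
      · refine lt_of_le_of_ne (hlead e h) ?_
        intro hcon
        apply hne'
        have : Finsupp.equivMapDomain σ e = Finsupp.equivMapDomain σ m := hcon
        ext i
        have := DFunLike.congr_fun this (σ i)
        simpa [Finsupp.equivMapDomain_apply] using this
    rw [Finsupp.Lex.lt_iff] at hlex
    obtain ⟨i0, hi0eq, hi0lt⟩ := hlex
    rw [hlval e, hlval m, Nat.cast_lt]
    apply lex_sum_lt B (n + 1) hB1 _ _ ?_ (i0 : ℕ) i0.isLt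
    · intro j hj
      have hjN : j < n + 1 := lt_trans hj i0.isLt
      simp only [dif_pos hjN]
      have h6 := hi0eq ⟨j, hjN⟩ hj
      simp only [ofLex_toLex] at h6
      rw [h6]
    · simp only [dif_pos i0.isLt, Fin.eta]
      simpa using hi0lt
    · intro j
      by_cases hjN : j < n + 1
      · simp only [dif_pos hjN]
        rw [Finsupp.equivMapDomain_apply]
        exact hBbound e he _
      · simp only [dif_neg hjN]; omega
  -- f m is an extreme point
  have hExt : f m ∈ Set.extremePoints ℝ (convexHull ℝ (f '' (q.support : Set (Fin (n+1) →₀ ℕ)))) := by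
    rw [← Finset.coe_image]
    apply unique_max_extreme _ _ (Finset.mem_image_of_mem f hmq) l
    intro y hy hyne
    obtain ⟨e, he, rfl⟩ := Finset.mem_image.mp hy
    apply hmax e he
    intro hcon
    exact hyne (by rw [hcon])
  obtain ⟨i, hi⟩ := hHadas q hcoord (f m) hExt
  have hmi : m i = 0 := by
    have : ((m i : ℕ) : ℝ) = 0 := hi
    exact_mod_cast this
  obtain ⟨d, hd1, hd2⟩ := hdiv
  have := hd1 i
  have := hd2 i
  omega
end
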